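/- Let Ω be an open subset of ℝ², c, d > 0, let u : Ω → [−c,c] be doubly increasing and v : Ω → [−d,d] be decreasing in x and increasing in y. Suppose u and v are everywhere differentiable with nowhere-vanishing partial derivatives (u_x, u_y > 0 and v_x < 0 < v_y), and that the image of Ω under φ(x,y) = (u(x,y), v(x,y)) equals the open rectangle (−c,c)×(−d,d). Then any doubly increasing w : Ω → [−c,c] whose partial derivatives coincide with those of u almost everywhere satisfies w = u everywhere on Ω. -/

import Mathlib

open Set MeasureTheory


lemma clm_decomp (L : ℝ × ℝ →L[ℝ] ℝ) (z : ℝ × ℝ) :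
    L z = z.1 * L (1, 0) + z.2 * L (0, 1) := by
  have hz : z = z.1 • ((1:ℝ), (0:ℝ)) + z.2 • ((0:ℝ), (1:ℝ)) := by
    ext <;> simp
  calc L z = L (z.1 • ((1:ℝ), (0:ℝ)) + z.2 • ((0:ℝ), (1:ℝ))) := by rw [← hz]
    _ = z.1 * L (1, 0) + z.2 * L (0, 1) := by
        rw [map_add, L.map_smul, L.map_smul]; simp [smul_eq_mul]

lemma line_hasDerivAt (F : ℝ × ℝ → ℝ) (p dir : ℝ × ℝ) (s : ℝ)
    (hF : DifferentiableAt ℝ F (p + s • dir)) :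
    HasDerivAt (fun r => F (p + r • dir)) (fderiv ℝ F (p + s • dir) dir) s := by
  have hline : HasDerivAt (fun r : ℝ => p + r • dir) dir s := by
    simpa using ((hasDerivAt_id s).smul_const dir).const_add p
  exact hF.hasFDerivAt.comp_hasDerivAt s hline

lemma seg_lt (F : ℝ × ℝ → ℝ) (p dir : ℝ × ℝ) (t0 : ℝ) (ht0 : 0 < t0)
    (hder : ∀ s ∈ Icc (0:ℝ) t0, DifferentiableAt ℝ F (p + s • dir) ∧
      0 < fderiv ℝ F (p + s • dir) dir) :
    F p < F (p + t0 • dir) := by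
  have key : StrictMonoOn (fun r => F (p + r • dir)) (Icc 0 t0) := by
    apply strictMonoOn_of_deriv_pos (convex_Icc 0 t0)
    · intro s hs
      exact ((line_hasDerivAt F p dir s (hder s hs).1).continuousAt).continuousWithinAt
    · intro s hs
      rw [interior_Icc] at hs
      have hs' : s ∈ Icc (0:ℝ) t0 := ⟨hs.1.le, hs.2.le⟩
      rw [(line_hasDerivAt F p dir s (hder s hs').1).deriv]
      exact (hder s hs').2
  have := key (left_mem_Icc.2 ht0.le) (right_mem_Icc.2 ht0.le) ht0
  simpa using this

lemma oneD_rigidity {c : ℝ} (hc : 0 < c) (f : ℝ → ℝ) (S : Set ℝ)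
    (hSmeas : MeasurableSet S) (hSsub : S ⊆ Ioo (-c) c)
    (hSfull : volume (Ioo (-c) c \ S) = 0)
    (hmono : MonotoneOn f (Ioo (-c) c))
    (hbdd : ∀ a ∈ Ioo (-c) c, f a ∈ Icc (-c) c)
    (hder : ∀ a ∈ S, HasDerivAt f 1 a) :
    ∀ a ∈ Ioo (-c) c, f a = a := by
  have incr : ∀ a1 ∈ Ioo (-c) c, ∀ a2 ∈ Ioo (-c) c, a1 ≤ a2 →
      a2 - a1 ≤ f a2 - f a1 := by
    intro a1 h1 a2 h2 h12
    rcases eq_or_lt_of_le h12 with rfl | hlt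
    · simp
    set T : Set ℝ := S ∩ Ioo a1 a2 with hT
    have hTmeas : MeasurableSet T := hSmeas.inter measurableSet_Ioo
    have hTsub : T ⊆ Ioo a1 a2 := inter_subset_right
    have hvolT : volume T = ENNReal.ofReal (a2 - a1) := by
      have hsub2 : Ioo a1 a2 \ T ⊆ Ioo (-c) c \ S := by
        intro z hz
        rcases hz with ⟨hz1, hz2⟩
        have hzIoo : z ∈ Ioo (-c) c := ⟨lt_trans h1.1 hz1.1, lt_trans hz1.2 h2.2⟩
        exact ⟨hzIoo, fun hzS => hz2 ⟨hzS, hz1⟩⟩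
      have h0 : volume (Ioo a1 a2 \ T) = 0 :=
        le_antisymm (le_trans (measure_mono hsub2) hSfull.le) zero_le
      have hle : volume (Ioo a1 a2) ≤ volume T := by
        calc volume (Ioo a1 a2) ≤ volume (T ∪ (Ioo a1 a2 \ T)) := by
              apply measure_mono; intro z hz
              by_cases hzT : z ∈ T
              · exact Or.inl hzT
              · exact Or.inr ⟨hz, hzT⟩
          _ ≤ volume T + volume (Ioo a1 a2 \ T) := measure_union_le _ _
          _ = volume T := by rw [h0, add_zero]
      rw [← Real.volume_Ioo]
      exact le_antisymm (measure_mono hTsub) hle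
    have hnojump : ∀ x ∈ T, ∀ y ∈ T, x < y → f x ≠ f y := by
      intro x hx y hy hxy hfeq
      have hxIoo := hSsub hx.1
      have hyIoo := hSsub hy.1
      have hconst : ∀ z ∈ Icc x y, f z = f x := by
        intro z hz
        have hzIoo : z ∈ Ioo (-c) c := ⟨lt_of_lt_of_le hxIoo.1 hz.1, lt_of_le_of_lt hz.2 hyIoo.2⟩
        have hl := hmono hxIoo hzIoo hz.1
        have hr := hmono hzIoo hyIoo hz.2
        rw [← hfeq] at hr
        exact le_antisymm hr hl
      have h1' : HasDerivWithinAt f 1 (Icc x y) x := (hder x hx.1).hasDerivWithinAt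
      have h0' : HasDerivWithinAt f 0 (Icc x y) x := by
        have hcw : HasDerivWithinAt (fun _ : ℝ => f x) 0 (Icc x y) x :=
          (hasDerivWithinAt_const x (Icc x y) (f x))
        exact hcw.congr hconst (hconst x ⟨le_rfl, hxy.le⟩)
      have huniq : UniqueDiffWithinAt ℝ (Icc x y) x :=
        (uniqueDiffOn_Icc hxy) x ⟨le_rfl, hxy.le⟩
      have : (1 : ℝ) = 0 := by
        have e1 := h1'.hasFDerivWithinAt
        have e0 := h0'.hasFDerivWithinAt
        have := huniq.eq e1 e0
        have := congrArg (fun L : ℝ →L[ℝ] ℝ => L 1) this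
        simpa using this
      norm_num at this
    have hinj : InjOn f T := by
      intro x hx y hy hfeq
      rcases lt_trichotomy x y with h | h | h
      · exact absurd hfeq (hnojump x hx y hy h)
      · exact h
      · exact absurd hfeq.symm (hnojump y hy x hx h)
    -- change of variables on T with derivative 1
    have hfd : ∀ x ∈ T, HasFDerivWithinAt f (ContinuousLinearMap.id ℝ ℝ) T x := by
      intro x hx
      have h := (hder x hx.1).hasFDerivAt
      have hid : ContinuousLinearMap.toSpanSingleton ℝ (1:ℝ) = ContinuousLinearMap.id ℝ ℝ := by
        ext z; simp
      rw [hid] at h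
      exact h.hasFDerivWithinAt
    have hcov := lintegral_abs_det_fderiv_eq_addHaar_image volume hTmeas
      (f' := fun _ => ContinuousLinearMap.id ℝ ℝ) hfd hinj
    have hdet : (ContinuousLinearMap.id ℝ ℝ).det = 1 := by
      simp [ContinuousLinearMap.det]
    simp only [hdet, abs_one, ENNReal.ofReal_one] at hcov
    have hcov' : volume T = volume (f '' T) := by
      rw [← hcov]; simp
    have himg : f '' T ⊆ Icc (f a1) (f a2) := by
      rintro _ ⟨x, hx, rfl⟩
      have hxI := hTsub hx
      have hxIoo : x ∈ Ioo (-c) c := hSsub hx.1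
      exact ⟨hmono h1 hxIoo hxI.1.le, hmono hxIoo h2 hxI.2.le⟩
    have : ENNReal.ofReal (a2 - a1) ≤ ENNReal.ofReal (f a2 - f a1) := by
      calc ENNReal.ofReal (a2 - a1) = volume T := hvolT.symm
        _ = volume (f '' T) := hcov'
        _ ≤ volume (Icc (f a1) (f a2)) := measure_mono himg
        _ = ENNReal.ofReal (f a2 - f a1) := Real.volume_Icc
    exact (ENNReal.ofReal_le_ofReal_iff (sub_nonneg.2 (hmono h1 h2 h12))).1 this
  -- squeeze
  intro a ha
  have hupper : f a ≤ a := by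
    apply le_of_forall_pos_le_add
    intro ε hε
    set a' := (max a (c - ε) + c) / 2 with ha'
    have ha'lt : a' < c := by
      have h1 : max a (c - ε) < c := max_lt ha.2 (by linarith)
      simp only [ha']; linarith
    have ha'ge : a ≤ a' := by
      have : a ≤ max a (c - ε) := le_max_left _ _
      have : a < c := ha.2
      simp only [ha']
      have := le_max_left a (c - ε)
      linarith
    have ha'Ioo : a' ∈ Ioo (-c) c := ⟨lt_of_lt_of_le ha.1 ha'ge, ha'lt⟩
    have hi := incr a ha a' ha'Ioo ha'ge
    have hfa' := (hbdd a' ha'Ioo).2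
    have hc_a' : c - a' ≤ ε := by
      have : c - ε ≤ max a (c - ε) := le_max_right _ _
      simp only [ha']; linarith
    linarith
  have hlower : a ≤ f a := by
    have : ∀ ε > (0:ℝ), a ≤ f a + ε := by
      intro ε hε
      set a'' := (min a (-c + ε) + (-c)) / 2 with ha''
      have ha''gt : -c < a'' := by
        have h1 : -c < min a (-c + ε) := lt_min ha.1 (by linarith)
        simp only [ha'']; linarith
      have ha''le : a'' ≤ a := by
        have h1 := min_le_left a (-c + ε)
        have : -c < a := ha.1
        simp only [ha'']; linarith
      have ha''Ioo : a'' ∈ Ioo (-c) c := ⟨ha''gt, lt_of_le_of_lt ha''le ha.2⟩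
      have hi := incr a'' ha''Ioo a ha ha''le
      have hfa'' := (hbdd a'' ha''Ioo).1
      have : a'' + c ≤ ε := by
        have h1 := min_le_right a (-c + ε)
        simp only [ha'']; linarith
      linarith
    linarith [le_of_forall_pos_le_add this]
  linarith


/-- Uniqueness from derivatives: with `u` doubly increasing, `v` decreasing in `x`
and increasing in `y`, both everywhere differentiable with nonzero partial
derivatives on an open set `Ω` and `(u,v)` surjective onto `(-c,c) × (-d,d)`, any
doubly increasing `w : Ω → [-c,c]` whose partial derivatives agree with those of `u`
almost everywhere equals `u` everywhere. -/
theorem stmt17 (Ω : Set (ℝ × ℝ)) (hΩ : IsOpen Ω) (c d : ℝ) (hc : 0 < c)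
    (hd : 0 < d) (u v : ℝ × ℝ → ℝ)
    (huval : ∀ p ∈ Ω, u p ∈ Set.Icc (-c) c)
    (hvval : ∀ p ∈ Ω, v p ∈ Set.Icc (-d) d)
    (humono : ∀ p ∈ Ω, ∀ q ∈ Ω, p.1 ≤ q.1 → p.2 ≤ q.2 → u p ≤ u q)
    (hvmono : ∀ p ∈ Ω, ∀ q ∈ Ω, q.1 ≤ p.1 → p.2 ≤ q.2 → v p ≤ v q)
    (hudiff : ∀ p ∈ Ω, DifferentiableAt ℝ u p ∧
      0 < fderiv ℝ u p (1, 0) ∧ 0 < fderiv ℝ u p (0, 1))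
    (hvdiff : ∀ p ∈ Ω, DifferentiableAt ℝ v p ∧
      fderiv ℝ v p (1, 0) < 0 ∧ 0 < fderiv ℝ v p (0, 1))
    (himage : (fun p => (u p, v p)) '' Ω = Set.Ioo (-c) c ×ˢ Set.Ioo (-d) d)
    (w : ℝ × ℝ → ℝ)
    (hwval : ∀ p ∈ Ω, w p ∈ Set.Icc (-c) c)
    (hwmono : ∀ p ∈ Ω, ∀ q ∈ Ω, p.1 ≤ q.1 → p.2 ≤ q.2 → w p ≤ w q)
    (hwderiv : ∀ᵐ p ∂(volume.restrict Ω), DifferentiableAt ℝ w p ∧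
      fderiv ℝ w p (1, 0) = fderiv ℝ u p (1, 0) ∧
      fderiv ℝ w p (0, 1) = fderiv ℝ u p (0, 1)) :
    ∀ p ∈ Ω, w p = u p := by
  set Φ : ℝ × ℝ → ℝ × ℝ := fun p => (u p, v p) with hΦdef
  set R : Set (ℝ × ℝ) := Set.Ioo (-c) c ×ˢ Set.Ioo (-d) d with hRdef
  have hRopen : IsOpen R := (isOpen_Ioo).prod (isOpen_Ioo)
  have hmemR : ∀ p ∈ Ω, Φ p ∈ R := by
    intro p hp; rw [← himage]; exact Set.mem_image_of_mem _ hp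
  have huIoo : ∀ p ∈ Ω, u p ∈ Set.Ioo (-c) c := fun p hp => (hmemR p hp).1
  have hvIoo : ∀ p ∈ Ω, v p ∈ Set.Ioo (-d) d := fun p hp => (hmemR p hp).2
  have hbox : ∀ p ∈ Ω, ∃ t > 0, ∀ z : ℝ × ℝ, |z.1 - p.1| ≤ t → |z.2 - p.2| ≤ t → z ∈ Ω := by
    intro p hp
    rcases Metric.isOpen_iff.1 hΩ p hp with ⟨ε, hε, hball⟩
    refine ⟨ε / 2, by linarith, fun z h1 h2 => hball ?_⟩
    rw [Metric.mem_ball, Prod.dist_eq]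
    have d1 : dist z.1 p.1 ≤ ε / 2 := by rw [Real.dist_eq]; exact h1
    have d2 : dist z.2 p.2 ≤ ε / 2 := by rw [Real.dist_eq]; exact h2
    exact max_lt (lt_of_le_of_lt d1 (by linarith)) (lt_of_le_of_lt d2 (by linarith))
  -- strict monotonicity lemmas
  have huX : ∀ p ∈ Ω, ∀ q ∈ Ω, p.1 < q.1 → p.2 ≤ q.2 → u p < u q := by
    intro p hp q hq h1 h2
    obtain ⟨t, ht, hbx⟩ := hbox p hp
    set t' := min t (q.1 - p.1) with ht'def
    have ht' : 0 < t' := lt_min ht (by linarith)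
    have ht't : t' ≤ t := min_le_left _ _
    have ht'q : t' ≤ q.1 - p.1 := min_le_right _ _
    have hseg : ∀ s ∈ Icc (0:ℝ) t', p + s • ((1:ℝ), (0:ℝ)) ∈ Ω := by
      intro s hs
      have e1 : (p + s • ((1:ℝ),(0:ℝ))).1 - p.1 = s := by simp
      have e2 : (p + s • ((1:ℝ),(0:ℝ))).2 - p.2 = 0 := by simp
      apply hbx
      · rw [e1, abs_of_nonneg hs.1]; exact le_trans hs.2 ht't
      · rw [e2]; simpa using ht.le
    have hlt := seg_lt u p (1, 0) t' ht'
      (fun s hs => ⟨(hudiff _ (hseg s hs)).1, (hudiff _ (hseg s hs)).2.1⟩)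
    have hmem := hseg t' ⟨le_refl 0 |>.trans ht'.le, le_rfl⟩
    have := humono _ hmem q hq (by simp; linarith) (by simp [h2])
    linarith
  have huY : ∀ p ∈ Ω, ∀ q ∈ Ω, p.1 ≤ q.1 → p.2 < q.2 → u p < u q := by
    intro p hp q hq h1 h2
    obtain ⟨t, ht, hbx⟩ := hbox p hp
    set t' := min t (q.2 - p.2) with ht'def
    have ht' : 0 < t' := lt_min ht (by linarith)
    have ht't : t' ≤ t := min_le_left _ _
    have ht'q : t' ≤ q.2 - p.2 := min_le_right _ _
    have hseg : ∀ s ∈ Icc (0:ℝ) t', p + s • ((0:ℝ), (1:ℝ)) ∈ Ω := by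
      intro s hs
      have e1 : (p + s • ((0:ℝ),(1:ℝ))).1 - p.1 = 0 := by simp
      have e2 : (p + s • ((0:ℝ),(1:ℝ))).2 - p.2 = s := by simp
      apply hbx
      · rw [e1]; simpa using ht.le
      · rw [e2, abs_of_nonneg hs.1]; exact le_trans hs.2 ht't
    have hlt := seg_lt u p (0, 1) t' ht'
      (fun s hs => ⟨(hudiff _ (hseg s hs)).1, (hudiff _ (hseg s hs)).2.2⟩)
    have hmem := hseg t' ⟨ht'.le, le_rfl⟩
    have := humono _ hmem q hq (by simp [h1]) (by simp; linarith)
    linarith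
  have hvX : ∀ p ∈ Ω, ∀ q ∈ Ω, q.1 < p.1 → p.2 ≤ q.2 → v p < v q := by
    intro p hp q hq h1 h2
    obtain ⟨t, ht, hbx⟩ := hbox p hp
    set t' := min t (p.1 - q.1) with ht'def
    have ht' : 0 < t' := lt_min ht (by linarith)
    have ht't : t' ≤ t := min_le_left _ _
    have ht'q : t' ≤ p.1 - q.1 := min_le_right _ _
    set p' : ℝ × ℝ := p + t' • ((-1:ℝ), (0:ℝ)) with hp'def
    have hback : ∀ s : ℝ, p' + s • ((1:ℝ), (0:ℝ)) = (p.1 - t' + s, p.2) := by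
      intro s; rw [hp'def]; ext <;> simp <;> ring
    have hseg : ∀ s ∈ Icc (0:ℝ) t', p' + s • ((1:ℝ), (0:ℝ)) ∈ Ω := by
      intro s hs
      rw [hback s]
      apply hbx
      · simp only []
        have e1 : ((p.1 - t' + s, p.2) : ℝ × ℝ).1 - p.1 = s - t' := by simp; ring
        rw [e1, abs_le]; constructor <;> linarith [hs.1, hs.2]
      · have e2 : ((p.1 - t' + s, p.2) : ℝ × ℝ).2 - p.2 = 0 := by simp
        rw [e2]; simpa using ht.le
    have hder : ∀ s ∈ Icc (0:ℝ) t', DifferentiableAt ℝ (fun z => -(v z)) (p' + s • ((1:ℝ),(0:ℝ))) ∧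
        0 < fderiv ℝ (fun z => -(v z)) (p' + s • ((1:ℝ),(0:ℝ))) (1, 0) := by
      intro s hs
      have hdv := hvdiff _ (hseg s hs)
      refine ⟨hdv.1.neg, ?_⟩
      rw [fderiv_fun_neg]
      simp only [ContinuousLinearMap.neg_apply]
      linarith [hdv.2.1]
    have hlt := seg_lt (fun z => -(v z)) p' (1, 0) t' ht' hder
    have hpp : p' + t' • ((1:ℝ), (0:ℝ)) = p := by rw [hback]; ext <;> simp
    rw [hpp] at hlt
    -- hlt : -(v p') < -(v p), i.e. v p < v p'
    have hp'mem : p' ∈ Ω := by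
      have := hseg 0 ⟨le_rfl, ht'.le⟩
      simpa using this
    have hcmp := hvmono p' hp'mem q hq (by rw [hp'def]; simp; linarith) (by rw [hp'def]; simp [h2])
    simp only [neg_lt_neg_iff] at hlt
    linarith
  have hvY : ∀ p ∈ Ω, ∀ q ∈ Ω, q.1 ≤ p.1 → p.2 < q.2 → v p < v q := by
    intro p hp q hq h1 h2
    obtain ⟨t, ht, hbx⟩ := hbox p hp
    set t' := min t (q.2 - p.2) with ht'def
    have ht' : 0 < t' := lt_min ht (by linarith)
    have ht't : t' ≤ t := min_le_left _ _
    have ht'q : t' ≤ q.2 - p.2 := min_le_right _ _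
    have hseg : ∀ s ∈ Icc (0:ℝ) t', p + s • ((0:ℝ), (1:ℝ)) ∈ Ω := by
      intro s hs
      have e1 : (p + s • ((0:ℝ),(1:ℝ))).1 - p.1 = 0 := by simp
      have e2 : (p + s • ((0:ℝ),(1:ℝ))).2 - p.2 = s := by simp
      apply hbx
      · rw [e1]; simpa using ht.le
      · rw [e2, abs_of_nonneg hs.1]; exact le_trans hs.2 ht't
    have hlt := seg_lt v p (0, 1) t' ht'
      (fun s hs => ⟨(hvdiff _ (hseg s hs)).1, (hvdiff _ (hseg s hs)).2.2⟩)
    have hmem := hseg t' ⟨ht'.le, le_rfl⟩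
    have := hvmono _ hmem q hq (by simp [h1]) (by simp; linarith)
    linarith
  -- order lemma
  have horder : ∀ p ∈ Ω, ∀ q ∈ Ω, u p < u q → v p = v q → p.1 ≤ q.1 ∧ p.2 ≤ q.2 := by
    intro p hp q hq huu hvv
    constructor
    · by_contra h
      push_neg at h
      rcases le_or_gt p.2 q.2 with h2 | h2
      · exact absurd hvv (ne_of_lt (hvX p hp q hq h h2))
      · exact absurd (humono q hq p hp h.le h2.le) (not_le.2 huu)
    · by_contra h
      push_neg at h
      rcases le_or_gt p.1 q.1 with h1 | h1
      · exact absurd hvv.symm (ne_of_lt (hvY q hq p hp h1 h))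
      · exact absurd (humono q hq p hp h1.le h.le) (not_le.2 huu)
  -- injectivity
  have hinjΦ : Set.InjOn Φ Ω := by
    intro p hp q hq heq
    have hu : u p = u q := congrArg Prod.fst heq
    have hv : v p = v q := congrArg Prod.snd heq
    have h1 : p.1 = q.1 := by
      by_contra hne
      rcases lt_or_gt_of_ne hne with h | h
      · rcases le_or_gt p.2 q.2 with h2 | h2
        · exact absurd hu (ne_of_lt (huX p hp q hq h h2))
        · exact absurd hv.symm (ne_of_lt (hvX q hq p hp h h2.le))
      · rcases le_or_gt q.2 p.2 with h2 | h2
        · exact absurd hu.symm (ne_of_lt (huX q hq p hp h h2))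
        · exact absurd hv (ne_of_lt (hvX p hp q hq h h2.le))
    have h2 : p.2 = q.2 := by
      by_contra hne
      rcases lt_or_gt_of_ne hne with h | h
      · exact absurd hu (ne_of_lt (huY p hp q hq h1.le h))
      · exact absurd hu.symm (ne_of_lt (huY q hq p hp h1.ge h))
    exact Prod.ext h1 h2
  -- the inverse map
  have hgex : ∀ z ∈ R, ∃ p ∈ Ω, Φ p = z := by
    intro z hz
    rw [← himage] at hz
    rcases hz with ⟨p, hp, hpz⟩
    exact ⟨p, hp, hpz⟩
  set g : ℝ × ℝ → ℝ × ℝ := Function.invFunOn Φ Ω with hgdef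
  have hgmem : ∀ z ∈ R, g z ∈ Ω := fun z hz => Function.invFunOn_mem (by
    rcases hgex z hz with ⟨p, hp, hpz⟩; exact ⟨p, hp, hpz⟩)
  have hgright : ∀ z ∈ R, Φ (g z) = z := fun z hz => Function.invFunOn_eq (by
    rcases hgex z hz with ⟨p, hp, hpz⟩; exact ⟨p, hp, hpz⟩)
  have hgleft : ∀ p ∈ Ω, g (Φ p) = p := fun p hp => hinjΦ.leftInvOn_invFunOn hp
  have hgu : ∀ z ∈ R, u (g z) = z.1 := fun z hz => congrArg Prod.fst (hgright z hz)
  have hgv : ∀ z ∈ R, v (g z) = z.2 := fun z hz => congrArg Prod.snd (hgright z hz)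
  -- continuity of g on R
  have hgcont : ∀ z ∈ R, ContinuousAt g z := by
    intro z hz
    set q0 := g z with hq0def
    have hq0 : q0 ∈ Ω := hgmem z hz
    have hΦq0 : Φ q0 = z := hgright z hz
    rw [Metric.continuousAt_iff]
    intro ε hε
    obtain ⟨t0, ht0, hbx⟩ := hbox q0 hq0
    set t := min t0 (ε / 2) with htdef
    have ht : 0 < t := lt_min ht0 (by linarith)
    have htt0 : t ≤ t0 := min_le_left _ _
    have htε : t ≤ ε / 2 := min_le_right _ _
    set rE : ℝ × ℝ := (q0.1 + t, q0.2) with hrE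
    set rW : ℝ × ℝ := (q0.1 - t, q0.2) with hrW
    set rN : ℝ × ℝ := (q0.1, q0.2 + t) with hrN
    set rS : ℝ × ℝ := (q0.1, q0.2 - t) with hrS
    have habst : |t| ≤ t0 := by rw [abs_of_nonneg ht.le]; exact htt0
    have habsnt : |(-t : ℝ)| ≤ t0 := by rw [abs_neg]; exact habst
    have habs0 : |(0:ℝ)| ≤ t0 := by simpa using ht0.le
    have hrEΩ : rE ∈ Ω := hbx rE (by rw [show rE.1 - q0.1 = t by simp [hrE]]; exact habst)
      (by rw [show rE.2 - q0.2 = 0 by simp [hrE]]; exact habs0)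
    have hrWΩ : rW ∈ Ω := hbx rW (by rw [show rW.1 - q0.1 = -t by simp [hrW]; try ring]; exact habsnt)
      (by rw [show rW.2 - q0.2 = 0 by simp [hrW]]; exact habs0)
    have hrNΩ : rN ∈ Ω := hbx rN (by rw [show rN.1 - q0.1 = 0 by simp [hrN]]; exact habs0)
      (by rw [show rN.2 - q0.2 = t by simp [hrN]]; exact habst)
    have hrSΩ : rS ∈ Ω := hbx rS (by rw [show rS.1 - q0.1 = 0 by simp [hrS]]; exact habs0)
      (by rw [show rS.2 - q0.2 = -t by simp [hrS]; try ring]; exact habsnt)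
    have hmE : u q0 < u rE := huX q0 hq0 rE hrEΩ (by simp [hrE]; linarith) (by simp [hrE])
    have hmW : u rW < u q0 := huX rW hrWΩ q0 hq0 (by simp [hrW]; linarith) (by simp [hrW])
    have hmN : u q0 < u rN := huY q0 hq0 rN hrNΩ (by simp [hrN]) (by simp [hrN]; linarith)
    have hmS : u rS < u q0 := huY rS hrSΩ q0 hq0 (by simp [hrS]) (by simp [hrS]; linarith)
    have hnE : v rE < v q0 := hvX rE hrEΩ q0 hq0 (by simp [hrE]; linarith) (by simp [hrE])
    have hnW : v q0 < v rW := hvX q0 hq0 rW hrWΩ (by simp [hrW]; linarith) (by simp [hrW])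
    have hnN : v q0 < v rN := hvY q0 hq0 rN hrNΩ (by simp [hrN]) (by simp [hrN]; linarith)
    have hnS : v rS < v q0 := hvY rS hrSΩ q0 hq0 (by simp [hrS]) (by simp [hrS]; linarith)
    set δ1 : ℝ := min (min (u rE - u q0) (u q0 - u rW)) (min (u rN - u q0) (u q0 - u rS)) with hδ1
    set δ2 : ℝ := min (min (v q0 - v rE) (v rW - v q0)) (min (v rN - v q0) (v q0 - v rS)) with hδ2
    have hδ1pos : 0 < δ1 := by
      apply lt_min (lt_min (by linarith) (by linarith)) (lt_min (by linarith) (by linarith))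
    have hδ2pos : 0 < δ2 := by
      apply lt_min (lt_min (by linarith) (by linarith)) (lt_min (by linarith) (by linarith))
    obtain ⟨ρ, hρ, hρball⟩ := Metric.isOpen_iff.1 hRopen z hz
    set δ : ℝ := min (min δ1 δ2) ρ with hδdef
    have hδpos : 0 < δ := lt_min (lt_min hδ1pos hδ2pos) hρ
    refine ⟨δ, hδpos, ?_⟩
    intro z' hz'
    have hz'R : z' ∈ R := hρball (lt_of_lt_of_le hz' (le_trans (min_le_right _ _) le_rfl))
    set q' := g z' with hq'def
    have hq' : q' ∈ Ω := hgmem z' hz'R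
    have hΦq' : Φ q' = z' := hgright z' hz'R
    have hd1 : |u q' - u q0| < δ1 := by
      have h1 : dist z'.1 z.1 ≤ dist z' z := le_max_left _ _
      have : dist z'.1 z.1 < δ1 := lt_of_le_of_lt h1 (lt_of_lt_of_le hz' (le_trans (min_le_left _ _) (min_le_left _ _)))
      have e1 : z'.1 = u q' := (congrArg Prod.fst hΦq').symm
      have e2 : z.1 = u q0 := (congrArg Prod.fst hΦq0).symm
      rwa [Real.dist_eq, e1, e2] at this
    have hd2 : |v q' - v q0| < δ2 := by
      have h1 : dist z'.2 z.2 ≤ dist z' z := le_max_right _ _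
      have : dist z'.2 z.2 < δ2 := lt_of_le_of_lt h1 (lt_of_lt_of_le hz' (le_trans (min_le_left _ _) (min_le_right _ _)))
      have e1 : z'.2 = v q' := (congrArg Prod.snd hΦq').symm
      have e2 : z.2 = v q0 := (congrArg Prod.snd hΦq0).symm
      rwa [Real.dist_eq, e1, e2] at this
    have hu_lt : u q' < u q0 + δ1 := by have := abs_lt.1 hd1; linarith [this.2]
    have hu_gt : u q0 - δ1 < u q' := by have := abs_lt.1 hd1; linarith [this.1]
    have hv_lt : v q' < v q0 + δ2 := by have := abs_lt.1 hd2; linarith [this.2]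
    have hv_gt : v q0 - δ2 < v q' := by have := abs_lt.1 hd2; linarith [this.1]
    have hδ1E : δ1 ≤ u rE - u q0 := le_trans (min_le_left _ _) (min_le_left _ _)
    have hδ1W : δ1 ≤ u q0 - u rW := le_trans (min_le_left _ _) (min_le_right _ _)
    have hδ1N : δ1 ≤ u rN - u q0 := le_trans (min_le_right _ _) (min_le_left _ _)
    have hδ1S : δ1 ≤ u q0 - u rS := le_trans (min_le_right _ _) (min_le_right _ _)
    have hδ2E : δ2 ≤ v q0 - v rE := le_trans (min_le_left _ _) (min_le_left _ _)
    have hδ2W : δ2 ≤ v rW - v q0 := le_trans (min_le_left _ _) (min_le_right _ _)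
    have hδ2N : δ2 ≤ v rN - v q0 := le_trans (min_le_right _ _) (min_le_left _ _)
    have hδ2S : δ2 ≤ v q0 - v rS := le_trans (min_le_right _ _) (min_le_right _ _)
    -- four bounding claims
    have cE : q'.1 ≤ q0.1 + t := by
      by_contra hcon
      push_neg at hcon
      rcases le_or_gt rE.2 q'.2 with h2 | h2
      · have := humono rE hrEΩ q' hq' (by simp [hrE]; linarith) h2
        linarith
      · have := hvmono q' hq' rE hrEΩ (by simp [hrE]; linarith) h2.le
        linarith
    have cW : q0.1 - t ≤ q'.1 := by
      by_contra hcon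
      push_neg at hcon
      rcases le_or_gt q'.2 rW.2 with h2 | h2
      · have := humono q' hq' rW hrWΩ (by simp [hrW]; linarith) h2
        linarith
      · have := hvmono rW hrWΩ q' hq' (by simp [hrW]; linarith) h2.le
        linarith
    have cN : q'.2 ≤ q0.2 + t := by
      by_contra hcon
      push_neg at hcon
      rcases le_or_gt rN.1 q'.1 with h1 | h1
      · have := humono rN hrNΩ q' hq' h1 (by simp [hrN]; linarith)
        linarith
      · have := hvmono rN hrNΩ q' hq' h1.le (by simp [hrN]; linarith)
        linarith
    have cS : q0.2 - t ≤ q'.2 := by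
      by_contra hcon
      push_neg at hcon
      rcases le_or_gt q'.1 rS.1 with h1 | h1
      · have := humono q' hq' rS hrSΩ h1 (by simp [hrS]; linarith)
        linarith
      · have := hvmono q' hq' rS hrSΩ h1.le (by simp [hrS]; linarith)
        linarith
    have : dist q' q0 ≤ t := by
      rw [Prod.dist_eq]
      apply max_le
      · rw [Real.dist_eq, abs_le]; constructor <;> linarith
      · rw [Real.dist_eq, abs_le]; constructor <;> linarith
    calc dist (g z') (g z) = dist q' q0 := rfl
      _ ≤ t := this
      _ < ε := by linarith
  -- derivative of Φ as a continuous linear equivalence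
  have hAex : ∀ q ∈ Ω, ∃ A : (ℝ × ℝ) ≃L[ℝ] (ℝ × ℝ),
      HasFDerivAt Φ (A : (ℝ × ℝ) →L[ℝ] (ℝ × ℝ)) q := by
    intro q hq
    set L : (ℝ × ℝ) →L[ℝ] (ℝ × ℝ) := (fderiv ℝ u q).prod (fderiv ℝ v q) with hLdef
    have hL : HasFDerivAt Φ L q :=
      HasFDerivAt.prodMk ((hudiff q hq).1.hasFDerivAt) ((hvdiff q hq).1.hasFDerivAt)
    obtain ⟨hud, hux, huy⟩ := hudiff q hq
    obtain ⟨hvd, hvx, hvy⟩ := hvdiff q hq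
    have hker : ∀ z : ℝ × ℝ, L z = 0 → z = 0 := by
      intro z hz
      rw [hLdef, ContinuousLinearMap.prod_apply] at hz
      have h1 : fderiv ℝ u q z = 0 := congrArg Prod.fst hz
      have h2 : fderiv ℝ v q z = 0 := congrArg Prod.snd hz
      have eu : z.1 * fderiv ℝ u q (1,0) + z.2 * fderiv ℝ u q (0,1) = 0 :=
        (clm_decomp (fderiv ℝ u q) z).symm.trans h1
      have ev : z.1 * fderiv ℝ v q (1,0) + z.2 * fderiv ℝ v q (0,1) = 0 :=
        (clm_decomp (fderiv ℝ v q) z).symm.trans h2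
      have hdet : 0 < fderiv ℝ u q (1,0) * fderiv ℝ v q (0,1)
          - fderiv ℝ u q (0,1) * fderiv ℝ v q (1,0) := by nlinarith
      have hcomb : z.1 * (fderiv ℝ u q (1,0) * fderiv ℝ v q (0,1)
          - fderiv ℝ u q (0,1) * fderiv ℝ v q (1,0)) = 0 := by
        linear_combination fderiv ℝ v q (0,1) * eu - fderiv ℝ u q (0,1) * ev
      have hz1 : z.1 = 0 := by
        rcases mul_eq_zero.1 hcomb with h | h
        · exact h
        · exact absurd h (ne_of_gt hdet)
      have hz2 : z.2 = 0 := by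
        rw [hz1] at eu
        simp only [zero_mul, zero_add] at eu
        rcases mul_eq_zero.1 eu with h | h
        · exact h
        · exact absurd h (ne_of_gt huy)
      exact Prod.ext hz1 hz2
    have hinj : Function.Injective L := by
      intro x y hxy
      have h0 : L (x - y) = 0 := by rw [map_sub, hxy, sub_self]
      exact sub_eq_zero.1 (hker _ h0)
    have hbij : Function.Bijective (L : (ℝ × ℝ) →ₗ[ℝ] (ℝ × ℝ)) :=
      ⟨hinj, LinearMap.injective_iff_surjective.1 hinj⟩
    refine ⟨(LinearEquiv.ofBijective (L : (ℝ × ℝ) →ₗ[ℝ] (ℝ × ℝ)) hbij).toContinuousLinearEquiv, ?_⟩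
    have hcoe : (((LinearEquiv.ofBijective (L : (ℝ × ℝ) →ₗ[ℝ] (ℝ × ℝ)) hbij).toContinuousLinearEquiv
        : (ℝ × ℝ) ≃L[ℝ] (ℝ × ℝ)) : (ℝ × ℝ) →L[ℝ] (ℝ × ℝ)) = L := by
      ext z <;> rfl
    rw [hcoe]
    exact hL
  -- a.e. differentiability set
  set P : ℝ × ℝ → Prop := fun p => DifferentiableAt ℝ w p ∧
      fderiv ℝ w p (1, 0) = fderiv ℝ u p (1, 0) ∧
      fderiv ℝ w p (0, 1) = fderiv ℝ u p (0, 1) with hPdef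
  have hae : ∀ᵐ p ∂(volume : Measure (ℝ × ℝ)), p ∈ Ω → P p :=
    (ae_restrict_iff' hΩ.measurableSet).1 hwderiv
  have hnull : volume {p : ℝ × ℝ | ¬(p ∈ Ω → P p)} = 0 := ae_iff.1 hae
  set M : Set (ℝ × ℝ) := toMeasurable volume {p : ℝ × ℝ | ¬(p ∈ Ω → P p)} with hMdef
  have hMmeas : MeasurableSet M := measurableSet_toMeasurable _ _
  have hMnull : volume M = 0 := by rw [hMdef, measure_toMeasurable]; exact hnull
  set N : Set (ℝ × ℝ) := M ∩ Ω with hNdef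
  have hNmeas : MeasurableSet N := hMmeas.inter hΩ.measurableSet
  have hNnull : volume N = 0 :=
    le_antisymm (le_trans (measure_mono inter_subset_left) hMnull.le) zero_le
  have hNsub : N ⊆ Ω := inter_subset_right
  have hPgood : ∀ p ∈ Ω, p ∉ N → P p := by
    intro p hp hpn
    by_contra hP
    exact hpn ⟨subset_toMeasurable _ _ (fun h => hP (h hp)), hp⟩
  -- image of the bad set is null
  have himgnull : volume (Φ '' N) = 0 := by
    have hder : ∀ q ∈ N, HasFDerivWithinAt Φ ((fderiv ℝ u q).prod (fderiv ℝ v q)) N q :=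
      fun q hq => (HasFDerivAt.prodMk ((hudiff q (hNsub hq)).1.hasFDerivAt)
        ((hvdiff q (hNsub hq)).1.hasFDerivAt)).hasFDerivWithinAt
    have hle := addHaar_image_le_lintegral_abs_det_fderiv volume hNmeas hder
    have hzero : (∫⁻ x in N, ENNReal.ofReal |(((fderiv ℝ u x).prod (fderiv ℝ v x))).det| ∂volume) = 0 := by
      have hres : volume.restrict N = 0 := Measure.restrict_eq_zero.2 hNnull
      rw [hres, lintegral_zero_measure]
    exact le_antisymm (hzero ▸ hle) zero_le
  set K : Set (ℝ × ℝ) := toMeasurable volume (Φ '' N) with hKdef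
  have hKmeas : MeasurableSet K := measurableSet_toMeasurable _ _
  have hKnull : volume K = 0 := by rw [hKdef, measure_toMeasurable]; exact himgnull
  have hKsub : Φ '' N ⊆ K := subset_toMeasurable _ _
  -- slicing
  have hswapnull : ((volume : Measure ℝ).prod (volume : Measure ℝ)) (Prod.swap ⁻¹' K) = 0 := by
    have h1 := (Measure.measurePreserving_swap (μ := (volume : Measure ℝ)) (ν := (volume : Measure ℝ))).measure_preimage
      (hKmeas.nullMeasurableSet)
    rw [h1, ← Measure.volume_eq_prod ℝ ℝ]
    exact hKnull
  have haeslice := Measure.measure_ae_null_of_prod_null hswapnull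
  set GoodB : Set ℝ := {b : ℝ | volume (Prod.mk b ⁻¹' (Prod.swap ⁻¹' K)) = 0} with hGoodBdef
  have hGoodB : volume GoodBᶜ = 0 := ae_iff.1 haeslice
  -- for each good b, w = u on the corresponding level set
  have hgood : ∀ b ∈ GoodB, b ∈ Ioo (-d) d → ∀ q ∈ Ω, v q = b → w q = u q := by
    intro b hbGood hbIoo
    set f : ℝ → ℝ := fun a => w (g (a, b)) with hfdef
    have hmemz : ∀ a ∈ Ioo (-c) c, ((a : ℝ), b) ∈ R := fun a ha => Set.mem_prod.2 ⟨ha, hbIoo⟩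
    set S : Set ℝ := Ioo (-c) c ∩ {a : ℝ | (a, b) ∈ K}ᶜ with hSdef
    have hSmeas : MeasurableSet S := by
      apply measurableSet_Ioo.inter
      have hm : Measurable (fun a : ℝ => ((a, b) : ℝ × ℝ)) := measurable_id.prodMk measurable_const
      exact (hKmeas.preimage hm).compl
    have hSsub : S ⊆ Ioo (-c) c := inter_subset_left
    have hSfull : volume (Ioo (-c) c \ S) = 0 := by
      have hsub : Ioo (-c) c \ S ⊆ {a : ℝ | (a, b) ∈ K} := by
        rintro a ⟨ha1, ha2⟩
        by_contra h
        exact ha2 ⟨ha1, h⟩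
      have hKb : volume {a : ℝ | (a, b) ∈ K} = 0 := hbGood
      exact le_antisymm (le_trans (measure_mono hsub) hKb.le) zero_le
    have hmono : MonotoneOn f (Ioo (-c) c) := by
      intro a1 h1 a2 h2 h12
      rcases eq_or_lt_of_le h12 with rfl | hlt
      · exact le_rfl
      have hq1 : g (a1, b) ∈ Ω := hgmem _ (hmemz a1 h1)
      have hq2 : g (a2, b) ∈ Ω := hgmem _ (hmemz a2 h2)
      have hord := horder (g (a1, b)) hq1 (g (a2, b)) hq2
        (by rw [hgu _ (hmemz a1 h1), hgu _ (hmemz a2 h2)]; exact hlt)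
        (by rw [hgv _ (hmemz a1 h1), hgv _ (hmemz a2 h2)])
      exact hwmono _ hq1 _ hq2 hord.1 hord.2
    have hbdd : ∀ a ∈ Ioo (-c) c, f a ∈ Icc (-c) c := fun a ha => hwval _ (hgmem _ (hmemz a ha))
    have hder1 : ∀ a ∈ S, HasDerivAt f 1 a := by
      intro a haS
      have haIoo : a ∈ Ioo (-c) c := haS.1
      have hzR : ((a : ℝ), b) ∈ R := hmemz a haIoo
      have hqΩ : g (a, b) ∈ Ω := hgmem _ hzR
      have hqN : g (a, b) ∉ N := by
        intro hqN
        have h1 : Φ (g (a, b)) ∈ K := hKsub (Set.mem_image_of_mem _ hqN)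
        rw [hgright _ hzR] at h1
        exact haS.2 h1
      have hP := hPgood _ hqΩ hqN
      obtain ⟨A, hAq⟩ := hAex _ hqΩ
      have hgq : HasFDerivAt g (A.symm : (ℝ × ℝ) →L[ℝ] (ℝ × ℝ)) (a, b) := by
        apply HasFDerivAt.of_local_left_inverse (hgcont _ hzR) hAq
        filter_upwards [hRopen.mem_nhds hzR] with y hy
        exact hgright y hy
      have hline : HasDerivAt (fun a' : ℝ => ((a', b) : ℝ × ℝ)) ((1:ℝ), (0:ℝ)) a :=
        HasDerivAt.prodMk (hasDerivAt_id a) (hasDerivAt_const a b)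
      have hgb : HasDerivAt (fun a' : ℝ => g (a', b)) (A.symm (1, 0)) a :=
        by have := HasFDerivAt.comp_hasDerivAt a hgq hline; exact this
      have huc : HasDerivAt (fun a' : ℝ => u (g (a', b)))
          (fderiv ℝ u (g (a, b)) (A.symm (1, 0))) a :=
        (hudiff _ hqΩ).1.hasFDerivAt.comp_hasDerivAt a hgb
      have hid : (fun a' : ℝ => u (g (a', b))) =ᶠ[nhds a] id := by
        filter_upwards [isOpen_Ioo.eventually_mem haIoo] with a' ha'
        exact hgu (a', b) (hmemz a' ha')
      have hone : fderiv ℝ u (g (a, b)) (A.symm (1, 0)) = 1 := by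
        have h1 : HasDerivAt (id : ℝ → ℝ) (fderiv ℝ u (g (a, b)) (A.symm (1, 0))) a :=
          huc.congr_of_eventuallyEq hid.symm
        exact h1.unique (hasDerivAt_id a)
      have hwc : HasDerivAt f (fderiv ℝ w (g (a, b)) (A.symm (1, 0))) a :=
        hP.1.hasFDerivAt.comp_hasDerivAt a hgb
      have heq : fderiv ℝ w (g (a, b)) (A.symm (1, 0)) = fderiv ℝ u (g (a, b)) (A.symm (1, 0)) := by
        rw [clm_decomp (fderiv ℝ w (g (a, b))) (A.symm (1, 0)),
          clm_decomp (fderiv ℝ u (g (a, b))) (A.symm (1, 0)), hP.2.1, hP.2.2]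
      rw [heq, hone] at hwc
      exact hwc
    have hfid := oneD_rigidity hc f S hSmeas hSsub hSfull hmono hbdd hder1
    intro q hqΩ hvqb
    have haIoo : u q ∈ Ioo (-c) c := huIoo q hqΩ
    have hgq : g (u q, b) = q := by
      rw [← hvqb]
      exact hgleft q hqΩ
    have := hfid (u q) haIoo
    rw [hfdef] at this
    simp only [hgq] at this
    exact this
  -- GoodB is dense in any interval
  have hGoodDense : ∀ b1 b2 : ℝ, b1 < b2 → ∃ bs ∈ GoodB, b1 < bs ∧ bs < b2 := by
    intro b1 b2 h12
    by_contra hcon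
    push_neg at hcon
    have hsub : Ioo b1 b2 ⊆ GoodBᶜ := by
      intro x hx hxG
      exact absurd hx.2 (not_lt.2 (le_of_not_gt (fun h => absurd hx.2 (not_lt.2 (hcon x hxG hx.1)))))
    have hle : volume (Ioo b1 b2) ≤ volume GoodBᶜ := measure_mono hsub
    rw [hGoodB, Real.volume_Ioo] at hle
    have : (0:ℝ) < b2 - b1 := by linarith
    exact absurd (le_antisymm hle zero_le) (ne_of_gt (ENNReal.ofReal_pos.2 this))
  -- conclusion
  intro p0 hp0
  have ha0Ioo : u p0 ∈ Ioo (-c) c := huIoo p0 hp0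
  have hb0Ioo : v p0 ∈ Ioo (-d) d := hvIoo p0 hp0
  have hub : ∀ δ > (0:ℝ), w p0 ≤ u p0 + δ := by
    intro δ hδ
    set a0 := u p0 with ha0
    set b0 := v p0 with hb0
    set a1 := min (a0 + δ/2) ((a0 + c)/2) with ha1def
    have ha1gt : a0 < a1 := lt_min (by linarith) (by cases ha0Ioo with | intro h1 h2 => linarith)
    have ha1lt : a1 < c := lt_of_le_of_lt (min_le_right _ _) (by cases ha0Ioo with | intro h1 h2 => linarith)
    have ha1le : a1 ≤ a0 + δ/2 := min_le_left _ _
    have ha1Ioo : a1 ∈ Ioo (-c) c := ⟨by cases ha0Ioo with | intro h1 h2 => linarith, ha1lt⟩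
    have hz1R : ((a1 : ℝ), b0) ∈ R := Set.mem_prod.2 ⟨ha1Ioo, hb0Ioo⟩
    set q1 := g (a1, b0) with hq1def
    have hq1Ω : q1 ∈ Ω := hgmem _ hz1R
    have hu1 : u q1 = a1 := hgu _ hz1R
    have hv1 : v q1 = b0 := hgv _ hz1R
    have hord := horder p0 hp0 q1 hq1Ω (by rw [hu1]; exact ha1gt) (by rw [hv1])
    obtain ⟨t0, ht0, hbx⟩ := hbox q1 hq1Ω
    have hnhd : Set.Iio (a1 + δ/2) ∈ nhds (u q1) := Iio_mem_nhds (by rw [hu1]; linarith)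
    obtain ⟨ε, hε, hball⟩ := Metric.mem_nhds_iff.1 ((hudiff _ hq1Ω).1.continuousAt.preimage_mem_nhds hnhd)
    set t1 := min t0 (ε/2) with ht1def
    have ht1pos : 0 < t1 := lt_min ht0 (by linarith)
    have ht1t0 : t1 ≤ t0 := min_le_left _ _
    have ht1ε : t1 ≤ ε/2 := min_le_right _ _
    have hsegΩ : ∀ s ∈ Icc (0:ℝ) t1, q1 + s • ((0:ℝ),(1:ℝ)) ∈ Ω := by
      intro s hs
      have e1 : (q1 + s • ((0:ℝ),(1:ℝ))).1 - q1.1 = 0 := by simp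
      have e2 : (q1 + s • ((0:ℝ),(1:ℝ))).2 - q1.2 = s := by simp
      apply hbx
      · rw [e1]; simpa using ht0.le
      · rw [e2, abs_of_nonneg hs.1]; exact le_trans hs.2 ht1t0
    have hsegball : ∀ s ∈ Icc (0:ℝ) t1, u (q1 + s • ((0:ℝ),(1:ℝ))) < a1 + δ/2 := by
      intro s hs
      apply hball
      rw [Metric.mem_ball, Prod.dist_eq]
      have e1 : (q1 + s • ((0:ℝ),(1:ℝ))).1 - q1.1 = 0 := by simp
      have e2 : (q1 + s • ((0:ℝ),(1:ℝ))).2 - q1.2 = s := by simp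
      apply max_lt
      · rw [Real.dist_eq, e1]; simpa using hε
      · rw [Real.dist_eq, e2, abs_of_nonneg hs.1]; linarith [hs.2]
    have hvlt : v q1 < v (q1 + t1 • ((0:ℝ),(1:ℝ))) :=
      seg_lt v q1 (0,1) t1 ht1pos
        (fun s hs => ⟨(hvdiff _ (hsegΩ s hs)).1, (hvdiff _ (hsegΩ s hs)).2.2⟩)
    rw [hv1] at hvlt
    obtain ⟨bs, hbsG, hbs1, hbs2⟩ := hGoodDense b0 (v (q1 + t1 • ((0:ℝ),(1:ℝ)))) hvlt
    have hcont : ContinuousOn (fun s => v (q1 + s • ((0:ℝ),(1:ℝ)))) (Icc 0 t1) :=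
      fun s hs => ((line_hasDerivAt v q1 (0,1) s (hvdiff _ (hsegΩ s hs)).1).continuousAt).continuousWithinAt
    have hbsmem : bs ∈ Ioo (v (q1 + (0:ℝ) • ((0:ℝ),(1:ℝ)))) (v (q1 + t1 • ((0:ℝ),(1:ℝ)))) := by
      refine ⟨?_, hbs2⟩
      simpa only [zero_smul, add_zero, hv1] using hbs1
    obtain ⟨sst, hsst, hvsst⟩ := intermediate_value_Ioo ht1pos.le hcont hbsmem
    set q' := q1 + sst • ((0:ℝ),(1:ℝ)) with hq'def
    have hq'Ω : q' ∈ Ω := hsegΩ sst ⟨hsst.1.le, hsst.2.le⟩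
    have hbsIoo : bs ∈ Ioo (-d) d := by
      have h1 : v (q1 + t1 • ((0:ℝ),(1:ℝ))) < d := (hvIoo _ (hsegΩ t1 ⟨ht1pos.le, le_rfl⟩)).2
      exact ⟨lt_trans hb0Ioo.1 hbs1, lt_trans hbs2 h1⟩
    have hwq' : w q' = u q' := hgood bs hbsG hbsIoo q' hq'Ω hvsst
    have hle1 : w p0 ≤ w q' := by
      apply hwmono p0 hp0 q' hq'Ω
      · have e1 : q'.1 = q1.1 := by rw [hq'def]; simp
        rw [e1]; exact hord.1
      · have e2 : q'.2 = q1.2 + sst := by rw [hq'def]; simp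
        rw [e2]; linarith [hord.2, hsst.1]
    have hle2 : u q' < a1 + δ/2 := hsegball sst ⟨hsst.1.le, hsst.2.le⟩
    rw [hwq'] at hle1
    linarith
  have hlb : ∀ δ > (0:ℝ), u p0 - δ ≤ w p0 := by
    intro δ hδ
    set a0 := u p0 with ha0
    set b0 := v p0 with hb0
    set a2 := max (a0 - δ/2) ((a0 - c)/2) with ha2def
    have ha2lt : a2 < a0 := max_lt (by linarith) (by cases ha0Ioo with | intro h1 h2 => linarith)
    have ha2gt : -c < a2 := lt_of_lt_of_le (by cases ha0Ioo with | intro h1 h2 => linarith) (le_max_right _ _)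
    have ha2ge : a0 - δ/2 ≤ a2 := le_max_left _ _
    have ha2Ioo : a2 ∈ Ioo (-c) c := ⟨ha2gt, by cases ha0Ioo with | intro h1 h2 => linarith⟩
    have hz2R : ((a2 : ℝ), b0) ∈ R := Set.mem_prod.2 ⟨ha2Ioo, hb0Ioo⟩
    set q2 := g (a2, b0) with hq2def
    have hq2Ω : q2 ∈ Ω := hgmem _ hz2R
    have hu2 : u q2 = a2 := hgu _ hz2R
    have hv2 : v q2 = b0 := hgv _ hz2R
    have hord := horder q2 hq2Ω p0 hp0 (by rw [hu2]; exact ha2lt) (by rw [hv2])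
    obtain ⟨t0, ht0, hbx⟩ := hbox q2 hq2Ω
    have hnhd : Set.Ioi (a2 - δ/2) ∈ nhds (u q2) := Ioi_mem_nhds (by rw [hu2]; linarith)
    obtain ⟨ε, hε, hball⟩ := Metric.mem_nhds_iff.1 ((hudiff _ hq2Ω).1.continuousAt.preimage_mem_nhds hnhd)
    set t1 := min t0 (ε/2) with ht1def
    have ht1pos : 0 < t1 := lt_min ht0 (by linarith)
    have ht1t0 : t1 ≤ t0 := min_le_left _ _
    have ht1ε : t1 ≤ ε/2 := min_le_right _ _
    have hsegΩ : ∀ s ∈ Icc (0:ℝ) t1, q2 + s • ((0:ℝ),(-1:ℝ)) ∈ Ω := by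
      intro s hs
      have e1 : (q2 + s • ((0:ℝ),(-1:ℝ))).1 - q2.1 = 0 := by simp
      have e2 : (q2 + s • ((0:ℝ),(-1:ℝ))).2 - q2.2 = -s := by simp
      apply hbx
      · rw [e1]; simpa using ht0.le
      · rw [e2, abs_neg, abs_of_nonneg hs.1]; exact le_trans hs.2 ht1t0
    have hsegball : ∀ s ∈ Icc (0:ℝ) t1, a2 - δ/2 < u (q2 + s • ((0:ℝ),(-1:ℝ))) := by
      intro s hs
      apply hball
      rw [Metric.mem_ball, Prod.dist_eq]
      have e1 : (q2 + s • ((0:ℝ),(-1:ℝ))).1 - q2.1 = 0 := by simp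
      have e2 : (q2 + s • ((0:ℝ),(-1:ℝ))).2 - q2.2 = -s := by simp
      apply max_lt
      · rw [Real.dist_eq, e1]; simpa using hε
      · rw [Real.dist_eq, e2, abs_neg, abs_of_nonneg hs.1]; linarith [hs.2]
    -- v decreases strictly downward
    have hback : (q2 + t1 • ((0:ℝ),(-1:ℝ))) + t1 • ((0:ℝ),(1:ℝ)) = q2 := by ext <;> simp
    have hsegΩ' : ∀ s ∈ Icc (0:ℝ) t1, (q2 + t1 • ((0:ℝ),(-1:ℝ))) + s • ((0:ℝ),(1:ℝ)) ∈ Ω := by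
      intro s hs
      have hrepr : (q2 + t1 • ((0:ℝ),(-1:ℝ))) + s • ((0:ℝ),(1:ℝ)) = q2 + (t1 - s) • ((0:ℝ),(-1:ℝ)) := by
        ext <;> simp <;> ring
      rw [hrepr]
      exact hsegΩ (t1 - s) ⟨by linarith [hs.2], by linarith [hs.1]⟩
    have hvlt : v (q2 + t1 • ((0:ℝ),(-1:ℝ))) < v q2 := by
      have := seg_lt v (q2 + t1 • ((0:ℝ),(-1:ℝ))) (0,1) t1 ht1pos
        (fun s hs => ⟨(hvdiff _ (hsegΩ' s hs)).1, (hvdiff _ (hsegΩ' s hs)).2.2⟩)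
      rwa [hback] at this
    rw [hv2] at hvlt
    obtain ⟨bs, hbsG, hbs1, hbs2⟩ := hGoodDense (v (q2 + t1 • ((0:ℝ),(-1:ℝ)))) b0 hvlt
    have hcont : ContinuousOn (fun s => v (q2 + s • ((0:ℝ),(-1:ℝ)))) (Icc 0 t1) :=
      fun s hs => ((line_hasDerivAt v q2 (0,-1) s (hvdiff _ (hsegΩ s hs)).1).continuousAt).continuousWithinAt
    have hbsmem : bs ∈ Ioo (v (q2 + t1 • ((0:ℝ),(-1:ℝ)))) (v (q2 + (0:ℝ) • ((0:ℝ),(-1:ℝ)))) := by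
      refine ⟨hbs1, ?_⟩
      simpa only [zero_smul, add_zero, hv2] using hbs2
    obtain ⟨sst, hsst, hvsst⟩ := intermediate_value_Ioo' ht1pos.le hcont hbsmem
    set q'' := q2 + sst • ((0:ℝ),(-1:ℝ)) with hq''def
    have hq''Ω : q'' ∈ Ω := hsegΩ sst ⟨hsst.1.le, hsst.2.le⟩
    have hbsIoo : bs ∈ Ioo (-d) d := by
      have h1 : -d < v (q2 + t1 • ((0:ℝ),(-1:ℝ))) := (hvIoo _ (hsegΩ t1 ⟨ht1pos.le, le_rfl⟩)).1
      exact ⟨lt_trans h1 hbs1, lt_trans hbs2 hb0Ioo.2⟩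
    have hwq'' : w q'' = u q'' := hgood bs hbsG hbsIoo q'' hq''Ω hvsst
    have hle1 : w q'' ≤ w p0 := by
      apply hwmono q'' hq''Ω p0 hp0
      · have e1 : q''.1 = q2.1 := by rw [hq''def]; simp
        rw [e1]; exact hord.1
      · have e2 : q''.2 = q2.2 - sst := by rw [hq''def]; simp; ring
        rw [e2]; linarith [hord.2, hsst.1]
    have hle2 : a2 - δ/2 < u q'' := hsegball sst ⟨hsst.1.le, hsst.2.le⟩
    rw [hwq''] at hle1
    linarith
  have h1 : w p0 ≤ u p0 := by
    apply le_of_forall_pos_le_add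
    intro ε hε
    exact hub ε hε
  have h2 : u p0 ≤ w p0 := by
    apply le_of_forall_pos_le_add
    intro ε hε
    linarith [hlb ε hε]
  linarith
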